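/- Let L = ℤ³ with the symmetric bilinear form b(v, w) = vᵀ G w given by the Gram matrix G = [[4,1,0],[1,4,0],[0,0,−2]], and let L∨ = {v ∈ ℚ³ : vᵀ G x ∈ ℤ for all x ∈ ℤ³} be the dual lattice. Then the quotient group L∨/L is cyclic of order 30, generated by the class of f₁ = (4/15, −1/15, 1/2), and b(f₁, f₁) = −7/30, which is congruent to 53/30 modulo 2ℤ. -/

import Mathlib

open Matrix

/-- The natural `ℤ`-linear embedding of `ℤ³` into `ℚ³`. -/
def castLM : (Fin 3 → ℤ) →ₗ[ℤ] (Fin 3 → ℚ) where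
  toFun x := fun i => (x i : ℚ)
  map_add' x y := by funext i; simp
  map_smul' c x := by funext i; simp [zsmul_eq_mul]

/-- The Gram matrix of the transcendental lattice `T₀` of the general `K3`-surface
in the family `Y_{λ, T×V}`. -/
def T₀ : Matrix (Fin 3) (Fin 3) ℚ := !![4, 1, 0; 1, 4, 0; 0, 0, -2]

/-- The dual lattice `L∨ = {v ∈ ℚ³ : vᵀ G x ∈ ℤ for all x ∈ ℤ³}` of `L = ℤ³` with
bilinear form given by the Gram matrix `G`. -/
def dualLattice (G : Matrix (Fin 3) (Fin 3) ℚ) : Submodule ℤ (Fin 3 → ℚ) where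
  carrier := {v | ∀ x : Fin 3 → ℤ, ∃ k : ℤ, v ⬝ᵥ G.mulVec (castLM x) = (k : ℚ)}
  zero_mem' := fun x => ⟨0, by simp⟩
  add_mem' := by
    intro v w hv hw x
    obtain ⟨k, hk⟩ := hv x
    obtain ⟨l, hl⟩ := hw x
    exact ⟨k + l, by rw [add_dotProduct, hk, hl]; push_cast; ring⟩
  smul_mem' := by
    intro c v hv x
    obtain ⟨k, hk⟩ := hv x
    exact ⟨c * k, by rw [smul_dotProduct, hk, zsmul_eq_mul]; push_cast; ring⟩

/-- The vector `f₁ = (4/15, -1/15, 1/2)`. -/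
def f₁ : Fin 3 → ℚ := ![4/15, -1/15, 1/2]

lemma pair_eval (v : Fin 3 → ℚ) (x : Fin 3 → ℤ) :
    v ⬝ᵥ T₀.mulVec (castLM x) =
      v 0 * (4 * x 0 + x 1) + v 1 * (x 0 + 4 * x 1) + v 2 * (-2 * x 2) := by
  simp [T₀, castLM, dotProduct, mulVec, Fin.sum_univ_three, LinearMap.coe_mk, AddHom.coe_mk]

lemma f₁_mem : f₁ ∈ dualLattice T₀ := by
  intro x
  refine ⟨x 0 - x 2, ?_⟩
  rw [pair_eval]
  simp [f₁]
  ring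

/-- Membership in the dual lattice gives the three integrality constraints. -/
lemma dual_coords {v : Fin 3 → ℚ} (hv : v ∈ dualLattice T₀) :
    ∃ a b c : ℤ, 4 * v 0 + v 1 = (a : ℚ) ∧ v 0 + 4 * v 1 = (b : ℚ) ∧ -2 * v 2 = (c : ℚ) := by
  obtain ⟨a, ha⟩ := hv ![1, 0, 0]
  obtain ⟨b, hb⟩ := hv ![0, 1, 0]
  obtain ⟨c, hc⟩ := hv ![0, 0, 1]
  rw [pair_eval] at ha hb hc
  have e1 : (![1, 0, 0] : Fin 3 → ℤ) 2 = 0 := rfl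
  have e2 : (![0, 1, 0] : Fin 3 → ℤ) 2 = 0 := rfl
  have e3 : (![0, 0, 1] : Fin 3 → ℤ) 2 = 1 := rfl
  norm_num [e1, e2, e3] at ha hb hc
  exact ⟨a, b, c, by linear_combination ha, by linear_combination hb, by linear_combination hc⟩

/-- The key computation: any dual vector is congruent to a multiple of `f₁` mod `ℤ³`. -/
lemma dual_reduce {v : Fin 3 → ℚ} (hv : v ∈ dualLattice T₀) :
    ∃ m : ℤ, v - m • f₁ ∈ LinearMap.range castLM := by
  obtain ⟨a, b, c, ha, hb, hc⟩ := dual_coords hv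
  refine ⟨16 * a - 64 * b + 15 * c, ⟨![-4*a + 17*b - 4*c, a - 4*b + c, -8*a + 32*b - 8*c], ?_⟩⟩
  funext i
  fin_cases i <;>
    simp [castLM, f₁, Pi.sub_apply, Pi.smul_apply, zsmul_eq_mul] <;>
    push_cast <;>
    [linear_combination (-4/15 : ℚ) * ha + (1/15 : ℚ) * hb;
     linear_combination (1/15 : ℚ) * ha + (-4/15 : ℚ) * hb;
     linear_combination (1/2 : ℚ) * hc]

lemma mul_f₁_mem {m : ℤ} (h : (m : ℤ) • f₁ ∈ LinearMap.range castLM) : (30 : ℤ) ∣ m := by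
  obtain ⟨x, hx⟩ := h
  have h1 := congrFun hx 1
  have h2 := congrFun hx 2
  simp [castLM, f₁, Pi.smul_apply, zsmul_eq_mul] at h1 h2
  have e1 : (15 * x 1 : ℚ) = (-m : ℤ) := by rw [h1]; push_cast; ring
  have e2 : (2 * x 2 : ℚ) = (m : ℤ) := by rw [h2]; ring
  have d1 : 15 * x 1 = -m := by exact_mod_cast e1
  have d2 : 2 * x 2 = m := by exact_mod_cast e2
  omega

/-- For `L = ℤ³` with the bilinear form `b` given by the Gram matrix
`[[4,1,0],[1,4,0],[0,0,-2]]`, the discriminant group `L∨/L` is cyclic of order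
`30`, generated by the class of `f₁ = (4/15, -1/15, 1/2)`; moreover
`b(f₁,f₁) = -7/30 ≡ 53/30 (mod 2ℤ)`. -/
theorem discriminant_group_TxV :
    ∃ hf : f₁ ∈ dualLattice T₀,
      f₁ ⬝ᵥ T₀.mulVec f₁ = -7/30 ∧
      (∃ k : ℤ, (-7/30 : ℚ) = 53/30 + 2 * (k : ℚ)) ∧
      Nat.card
        ((↥(dualLattice T₀)) ⧸
          (Submodule.comap (dualLattice T₀).subtype (LinearMap.range castLM))) = 30 ∧
      ∀ ξ : (↥(dualLattice T₀)) ⧸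
          (Submodule.comap (dualLattice T₀).subtype (LinearMap.range castLM)),
        ∃ m : ℤ,
          ξ = m • (Submodule.Quotient.mk (⟨f₁, hf⟩ : ↥(dualLattice T₀))) := by
  refine ⟨f₁_mem, ?_, ⟨-1, by norm_num⟩, ?_, ?_⟩
  · simp [T₀, f₁, dotProduct, mulVec, Fin.sum_univ_three]
    norm_num
  · set p := Submodule.comap (dualLattice T₀).subtype (LinearMap.range castLM) with hp
    set c : (↥(dualLattice T₀)) ⧸ p :=
      Submodule.Quotient.mk (⟨f₁, f₁_mem⟩ : ↥(dualLattice T₀)) with hc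
    have mem_iff : ∀ z : ↥(dualLattice T₀),
        (Submodule.Quotient.mk z : (↥(dualLattice T₀)) ⧸ p) = 0 ↔
          (z : Fin 3 → ℚ) ∈ LinearMap.range castLM := by
      intro z
      rw [Submodule.Quotient.mk_eq_zero, hp, Submodule.mem_comap]
      rfl
    have hsmul : ∀ m : ℤ, ((m • (⟨f₁, f₁_mem⟩ : ↥(dualLattice T₀)) :
        ↥(dualLattice T₀)) : Fin 3 → ℚ) = m • f₁ := fun m => rfl
    have h30 : (zmultiplesHom _ c) (30 : ℤ) = 0 := by
      show (30 : ℤ) • c = 0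
      rw [hc, ← Submodule.Quotient.mk_smul, mem_iff, hsmul]
      refine ⟨![8, -2, 15], ?_⟩
      funext i
      fin_cases i <;> simp [castLM, f₁] <;> norm_num
    set ψ : ZMod 30 →+ _ := ZMod.lift 30 ⟨zmultiplesHom _ c, h30⟩ with hψ
    have hinj : Function.Injective ψ := by
      rw [hψ, ZMod.lift_injective]
      intro m hm
      have : m • c = 0 := hm
      rw [hc, ← Submodule.Quotient.mk_smul, mem_iff, hsmul] at this
      rw [ZMod.intCast_zmod_eq_zero_iff_dvd]
      exact_mod_cast mul_f₁_mem this
    have hsurj : Function.Surjective ψ := by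
      intro ξ
      obtain ⟨⟨v, hv⟩, rfl⟩ := Submodule.Quotient.mk_surjective p ξ
      obtain ⟨m, hm⟩ := dual_reduce hv
      refine ⟨(m : ZMod 30), ?_⟩
      rw [hψ, ZMod.lift_coe]
      show m • c = _
      rw [hc, ← Submodule.Quotient.mk_smul, eq_comm, ← sub_eq_zero,
        ← Submodule.Quotient.mk_sub, mem_iff]
      exact hm
    rw [← Nat.card_eq_of_bijective ψ ⟨hinj, hsurj⟩, Nat.card_zmod]
  · intro ξ
    obtain ⟨⟨v, hv⟩, rfl⟩ := Submodule.Quotient.mk_surjective _ ξ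
    obtain ⟨m, hm⟩ := dual_reduce hv
    refine ⟨m, ?_⟩
    rw [← Submodule.Quotient.mk_smul, ← sub_eq_zero, ← Submodule.Quotient.mk_sub,
      Submodule.Quotient.mk_eq_zero, Submodule.mem_comap]
    exact hm
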